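/- arXiv:1606.00387 — 7 statements merged into one kernel-verified Lean document; each statement's English description precedes it below -/
import Mathlib

section
/- Under the Stochastic Blockmodel with partition matrix Z ∈ {0,1}^{N×K} (each row has exactly one 1), connectivity matrix B ∈ [0,1]^{K×K}, expected adjacency matrix 𝒜 = ZBZᵀ, and complement 𝒜̄ = J_{N×N} − 𝒜, the anti-cluster weight matrix W̃ = (𝒜𝒜̄ + 𝒜̄𝒜)·𝒜 (where · is entrywise product) satisfies W̃ = Z((BΘB̄ + B̄ΘB)·B)Zᵀ, where Θ = ZᵀZ is the diagonal matrix of block sizes and B̄ = J_{K×K} − B. -/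
open Finset Matrix

/-- Under the Stochastic Blockmodel with partition matrix `Z`, the anti-cluster
weight matrix `W̃ = (𝒜𝒜̄ + 𝒜̄𝒜)·𝒜` retains the block structure:
`W̃ = Z((BΘB̄ + B̄ΘB)·B)Zᵀ` with `Θ = ZᵀZ`. -/
theorem stmt1 {N K : ℕ}
    (Z : Matrix (Fin N) (Fin K) ℝ)
    (hZ01 : ∀ i k, Z i k = 0 ∨ Z i k = 1)
    (hZrow : ∀ i, ∃! k, Z i k = 1)
    (B : Matrix (Fin K) (Fin K) ℝ)
    (hB : ∀ k l, 0 ≤ B k l ∧ B k l ≤ 1) :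
    let A : Matrix (Fin N) (Fin N) ℝ := Z * B * Zᵀ
    let Abar : Matrix (Fin N) (Fin N) ℝ := (Matrix.of fun _ _ => (1 : ℝ)) - A
    let Bbar : Matrix (Fin K) (Fin K) ℝ := (Matrix.of fun _ _ => (1 : ℝ)) - B
    let Θ : Matrix (Fin K) (Fin K) ℝ := Zᵀ * Z
    Matrix.hadamard (A * Abar + Abar * A) A
      = Z * Matrix.hadamard (B * Θ * Bbar + Bbar * Θ * B) B * Zᵀ := by
  intro A Abar Bbar Θ
  -- choose block assignment f
  choose f hf1 hfu using hZrow
  have hZf : ∀ i k, Z i k = if k = f i then 1 else 0 := by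
    intro i k
    by_cases h : k = f i
    · simp [h, hf1 i]
    · rcases hZ01 i k with h0 | h1
      · simp [h, h0]
      · exact absurd (hfu i k h1) h
  -- entrywise formula for Z * M * Zᵀ
  have hent : ∀ (M : Matrix (Fin K) (Fin K) ℝ) (i j : Fin N),
      (Z * M * Zᵀ) i j = M (f i) (f j) := by
    intro M i j
    simp [Matrix.mul_apply, Matrix.transpose_apply, hZf, Finset.sum_ite_eq',
      ite_mul, mul_ite]
  -- Abar = Z * Bbar * Zᵀ
  have hAbar : Abar = Z * Bbar * Zᵀ := by
    ext i j
    have hA : A i j = B (f i) (f j) := hent B i j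
    simp only [Abar, Bbar, Matrix.sub_apply, Matrix.of_apply, hent, hA]
  have hAA : A * Abar = Z * (B * Θ * Bbar) * Zᵀ := by
    rw [hAbar]
    simp only [A, Θ, Matrix.mul_assoc]
  have hAA' : Abar * A = Z * (Bbar * Θ * B) * Zᵀ := by
    rw [hAbar]
    simp only [A, Θ, Matrix.mul_assoc]
  ext i j
  have hA : A i j = B (f i) (f j) := hent B i j
  rw [Matrix.hadamard_apply, Matrix.add_apply, hAA, hAA', hent, hent, hent, hA]
  simp [Matrix.hadamard_apply, Matrix.add_apply]
end

section
/- Let B = pI + rJ_{K×K} with 0 < r < p + r < 1, and let Θ be a K×K positive diagonal matrix of block sizes with Θ_{ll} r < Θ_{kk}(p+r) for all k ≠ l. Then for k ≠ l, [(BΘB̄)·B]_{kl} / [(BΘB̄)·B]_{kk} > B_{kl}/B_{kk} = r/(p+r). -/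
open Finset Matrix

/-- For `B = pI + rJ` with `0 < r < p + r < 1` and positive diagonal block-size
matrix `Θ` satisfying `Θ_{ll} r < Θ_{kk}(p+r)` for `k ≠ l`, the anti-cluster
weights increase the relative probability of out-of-block referrals:
`[(BΘB̄)·B]_{kl} / [(BΘB̄)·B]_{kk} > B_{kl}/B_{kk} = r/(p+r)`. -/
theorem stmt2 {K : ℕ} (p r : ℝ)
    (hr : 0 < r) (hpr : r < p + r) (h1 : p + r < 1)
    (Θ : Fin K → ℝ) (hΘ : ∀ k, 0 < Θ k)
    (hcond : ∀ k l : Fin K, k ≠ l → Θ l * r < Θ k * (p + r)) :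
    let B : Matrix (Fin K) (Fin K) ℝ :=
      Matrix.of fun k l => (if k = l then p else 0) + r
    let Bbar : Matrix (Fin K) (Fin K) ℝ := (Matrix.of fun _ _ => (1 : ℝ)) - B
    let M : Matrix (Fin K) (Fin K) ℝ :=
      Matrix.hadamard (B * Matrix.diagonal Θ * Bbar) B
    ∀ k l : Fin K, k ≠ l →
      M k l / M k k > B k l / B k k ∧ B k l / B k k = r / (p + r) := by
  intro B Bbar M k l hkl
  have hp : 0 < p := by linarith
  have hB : ∀ i j : Fin K, B i j = (if i = j then p else 0) + r := fun i j => rfl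
  have hBbar : ∀ i j : Fin K, Bbar i j = 1 - B i j := fun i j => rfl
  have hM : ∀ t : Fin K, M k t = (∑ m, B k m * Θ m * (1 - B m t)) * B k t := by
    intro t
    show (B * Matrix.diagonal Θ * Bbar) k t * B k t = _
    congr 1
    rw [Matrix.mul_apply]
    refine Finset.sum_congr rfl fun m _ => ?_
    rw [Matrix.mul_diagonal, hBbar]
  set Sk := ∑ m, B k m * Θ m * (1 - B m k) with hSk
  set Sl := ∑ m, B k m * Θ m * (1 - B m l) with hSl
  have hBpos : ∀ i j : Fin K, 0 < B i j := by
    intro i j; rw [hB]; split <;> linarith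
  have hBlt : ∀ i j : Fin K, B i j < 1 := by
    intro i j; rw [hB]; split <;> linarith
  have hSkpos : 0 < Sk := by
    apply Finset.sum_pos
    · intro m _
      exact mul_pos (mul_pos (hBpos k m) (hΘ m)) (by linarith [hBlt m k])
    · exact ⟨k, Finset.mem_univ k⟩
  have hdiff : Sl - Sk = p * (Θ k * (p + r) - Θ l * r) := by
    rw [hSl, hSk, ← Finset.sum_sub_distrib]
    have : ∀ m : Fin K, B k m * Θ m * (1 - B m l) - B k m * Θ m * (1 - B m k)
        = (if m = k then B k k * Θ k * p else 0) + (if m = l then -(B k l * Θ l * p) else 0) := by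
      intro m
      by_cases hmk : m = k
      · subst hmk
        simp [hkl, Ne.symm hkl, hB]
        ring
      · by_cases hml : m = l
        · subst hml
          simp [hmk, hB, hkl, Ne.symm hkl]
          ring
        · simp [hmk, hml, hB]
    rw [Finset.sum_congr rfl fun m _ => this m, Finset.sum_add_distrib,
      Finset.sum_ite_eq' Finset.univ k (fun _ => B k k * Θ k * p),
      Finset.sum_ite_eq' Finset.univ l (fun _ => -(B k l * Θ l * p))]
    simp [hB, hkl, Ne.symm hkl]
    ring
  have hSlk : Sk < Sl := by
    have hc := hcond k l hkl
    nlinarith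
  constructor
  · rw [hM k, hM l, hB k l, hB k k, if_neg hkl, if_pos rfl, zero_add]
    rw [← hSk, ← hSl, gt_iff_lt, div_lt_div_iff₀ (by positivity) (by positivity)]
    nlinarith [mul_lt_mul_of_pos_right (mul_lt_mul_of_pos_left hSlk hr) (show (0:ℝ) < p + r by linarith)]
  · rw [hB k l, hB k k, if_neg hkl, if_pos rfl, zero_add]
end

section
/- Under the Stochastic Blockmodel with B = pI + rJ_{K×K}, 0 < r < p+r < 1, and K blocks of equal size s (so N = sK), define 𝒜 = ZBZᵀ and the row-normalized transition matrix P_𝒜 = 𝒟⁻¹𝒜 where 𝒟 is the diagonal matrix of row sums of 𝒜. Then the eigenvalues of P_𝒜 are: 1 with multiplicity 1, 1/(Kr/p + 1) with multiplicity K−1, and 0 with multiplicity N−K. -/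
open Finset Matrix Polynomial

set_option maxHeartbeats 1000000
set_option synthInstance.maxHeartbeats 400000
set_option linter.unnecessarySeqFocus false
set_option linter.unusedVariables false

lemma charmap {n : Type*} [DecidableEq n] [Fintype n] {S : Type*} [CommRing S]
    (f : ℝ[X] →+* S) (M : Matrix n n ℝ) :
    (charmatrix M).map f = f X • (1 : Matrix n n S) - M.map (f.comp C) := by
  ext i j
  by_cases h : i = j <;>
    simp [charmatrix_apply, Matrix.map_apply, Matrix.one_apply, Matrix.diagonal_apply, h]

lemma charpoly_prod_comm {N K : ℕ} (hK : K ≤ N) (U : Matrix (Fin N) (Fin K) ℝ)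
    (V : Matrix (Fin K) (Fin N) ℝ) :
    (U * V).charpoly = X ^ (N - K) * (V * U).charpoly := by
  apply RatFunc.algebraMap_injective ℝ
  set f : ℝ[X] →+* RatFunc ℝ := (algebraMap ℝ[X] (RatFunc ℝ) : ℝ[X] →+* RatFunc ℝ)
  set g : ℝ →+* RatFunc ℝ := f.comp C
  set x : RatFunc ℝ := f X with hxdef
  have hx : x ≠ 0 := by
    simpa [hxdef] using
      (map_ne_zero_iff f (RatFunc.algebraMap_injective ℝ)).mpr (Polynomial.X_ne_zero)
  have hdet : ∀ {m : ℕ} (M : Matrix (Fin m) (Fin m) ℝ),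
      f M.charpoly = (x • (1 : Matrix (Fin m) (Fin m) (RatFunc ℝ)) - M.map g).det := by
    intro m M
    rw [Matrix.charpoly, RingHom.map_det, RingHom.mapMatrix_apply, charmap]
  rw [_root_.map_mul f, hdet, hdet, map_pow]
  have hmul : (U * V).map g = U.map g * V.map g := Matrix.map_mul
  have hmul2 : (V * U).map g = V.map g * U.map g := Matrix.map_mul
  rw [hmul, hmul2]
  set U' := U.map g
  set V' := V.map g
  have e1 : x • (1 : Matrix (Fin N) (Fin N) (RatFunc ℝ)) - U' * V'
      = x • ((1 : Matrix (Fin N) (Fin N) (RatFunc ℝ)) - (x⁻¹ • U') * V') := by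
    rw [smul_sub, Matrix.smul_mul, smul_smul, mul_inv_cancel₀ hx, one_smul]
  rw [e1, Matrix.det_smul, Matrix.det_one_sub_mul_comm, Matrix.mul_smul]
  have e2 : (1 : Matrix (Fin K) (Fin K) (RatFunc ℝ)) - x⁻¹ • (V' * U')
      = x⁻¹ • (x • (1 : Matrix (Fin K) (Fin K) (RatFunc ℝ)) - V' * U') := by
    rw [smul_sub, smul_smul, inv_mul_cancel₀ hx, one_smul]
  rw [e2, Matrix.det_smul]
  rw [Fintype.card_fin, Fintype.card_fin]
  rw [hxdef, ← map_pow]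
  field_simp
  have hpow : f X ^ N = f X ^ (N - K) * f X ^ K := by rw [← pow_add]; congr 1; omega
  rw [map_pow, hpow, one_div, inv_pow, mul_assoc (f X ^ (N - K)),
    mul_inv_cancel₀ (by rw [← hxdef]; exact pow_ne_zero K hx)]; ring

lemma charpoly_const_add_ones {K : ℕ} (hK : 0 < K) (c e : ℝ) :
    (c • (1 : Matrix (Fin K) (Fin K) ℝ) + e • Matrix.of (fun _ _ => (1 : ℝ))).charpoly
      = (X - C (c + e * K)) * (X - C c) ^ (K - 1) := by
  apply RatFunc.algebraMap_injective ℝ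
  set f : ℝ[X] →+* RatFunc ℝ := (algebraMap ℝ[X] (RatFunc ℝ) : ℝ[X] →+* RatFunc ℝ)
  set g : ℝ →+* RatFunc ℝ := f.comp C
  set x : RatFunc ℝ := f X with hxdef
  rw [Matrix.charpoly, RingHom.map_det, RingHom.mapMatrix_apply, charmap]
  set y : RatFunc ℝ := x - g c with hydef
  have hy : y ≠ 0 := by
    have : y = f (X - C c) := by
      rw [hydef, map_sub]; rfl
    rw [this]
    exact (map_ne_zero_iff f (RatFunc.algebraMap_injective ℝ)).mpr (Polynomial.X_sub_C_ne_zero c)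
  -- rewrite the matrix
  have hmap : (c • (1 : Matrix (Fin K) (Fin K) ℝ) + e • Matrix.of (fun _ _ => (1 : ℝ))).map g
      = g c • (1 : Matrix (Fin K) (Fin K) (RatFunc ℝ))
        + g e • Matrix.of (fun _ _ => (1 : RatFunc ℝ)) := by
    ext i j
    by_cases h : i = j <;>
      simp [Matrix.map_apply, Matrix.one_apply, h]
  rw [hmap]
  have key : x • (1 : Matrix (Fin K) (Fin K) (RatFunc ℝ))
      - (g c • 1 + g e • Matrix.of (fun _ _ => (1 : RatFunc ℝ)))
      = y • ((1 : Matrix (Fin K) (Fin K) (RatFunc ℝ))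
          + Matrix.replicateCol Unit (fun _ : Fin K => -(y⁻¹ * g e)) * Matrix.replicateRow Unit (fun _ : Fin K => (1 : RatFunc ℝ))) := by
    ext i j
    by_cases h : i = j <;>
      simp [Matrix.one_apply, Matrix.mul_apply, h, hydef, mul_comm, mul_assoc]
      <;> field_simp [show x - g c ≠ 0 from hy]
      <;> ring
  rw [key, Matrix.det_smul, Matrix.det_one_add_replicateCol_mul_replicateRow, Fintype.card_fin]
  have hdot : (fun _ : Fin K => (1 : RatFunc ℝ)) ⬝ᵥ (fun _ : Fin K => -(y⁻¹ * g e)) = -(y⁻¹ * g e) * K := by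
    simp [dotProduct, Finset.sum_const, nsmul_eq_mul]; ring
  rw [hdot]
  have hrhs : f ((X - C (c + e * K)) * (X - C c) ^ (K - 1))
      = (x - g c - g e * K) * y ^ (K - 1) := by
    rw [_root_.map_mul, map_pow, map_sub, map_sub, hydef]
    have h1 : f (C (c + e * K)) = g c + g e * K := by
      simp only [g, RingHom.comp_apply, map_add, _root_.map_mul, map_natCast]
    rw [h1]
    ring_nf
    simp only [g, RingHom.comp_apply, hxdef]; ring
  rw [hrhs]
  have hKpow : y ^ K = y ^ (K - 1) * y := by
    rw [← pow_succ]; congr 1; omega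
  rw [hKpow]
  field_simp
  ring

/-- Eigenvalues of the population transition matrix of a balanced SBM with
`B = pI + rJ`: eigenvalue `1` with multiplicity 1, `1/(Kr/p + 1)` with
multiplicity `K - 1`, and `0` with multiplicity `N - K`; encoded via the
characteristic polynomial of `P_𝒜 = 𝒟⁻¹𝒜`. -/
theorem stmt3 {N K s : ℕ} (hK : 0 < K) (hs : 0 < s) (hN : N = s * K)
    (z : Fin N → Fin K)
    (hbal : ∀ k, (Finset.univ.filter (fun i => z i = k)).card = s)
    (p r : ℝ) (hr : 0 < r) (hpr : r < p + r) (h1 : p + r < 1) :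
    let A : Matrix (Fin N) (Fin N) ℝ :=
      Matrix.of fun i j => (if z i = z j then p else 0) + r
    let P : Matrix (Fin N) (Fin N) ℝ :=
      Matrix.of fun i j => A i j / (∑ w, A i w)
    P.charpoly = (X - C 1) * (X - C (1 / ((K : ℝ) * r / p + 1))) ^ (K - 1)
        * X ^ (N - K) := by
  intro A P
  have hp : 0 < p := by linarith
  have hsR : (0 : ℝ) < s := by exact_mod_cast hs
  have hKR : (0 : ℝ) < K := by exact_mod_cast hK
  have hNR : (N : ℝ) = s * K := by exact_mod_cast hN
  set d : ℝ := p * s + r * N with hd_def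
  have hd : 0 < d := by
    have : (0 : ℝ) < N := by rw [hNR]; positivity
    have := mul_pos hr this
    nlinarith [mul_pos hp hsR]
  -- row sums
  have hrow : ∀ i : Fin N, (∑ w, A i w) = d := by
    intro i
    have h2 : (∑ w, (if z i = z w then p else 0)) = s * p := by
      rw [← Finset.sum_filter]
      rw [Finset.sum_const]
      have : (Finset.univ.filter (fun w => z i = z w)).card = s := by
        rw [← hbal (z i)]
        congr 1
        ext w
        simp [eq_comm]
      rw [this, nsmul_eq_mul]
    simp only [A, Matrix.of_apply]
    rw [Finset.sum_add_distrib, h2, Finset.sum_const, Finset.card_univ, Fintype.card_fin,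
      nsmul_eq_mul, hd_def]
    ring
  -- matrices
  set Y : Matrix (Fin N) (Fin K) ℝ := Matrix.of (fun i k => if z i = k then 1 else 0) with hY
  set Bm : Matrix (Fin K) (Fin K) ℝ :=
    Matrix.of (fun k l => (if k = l then p else 0) + r) with hBm
  set U : Matrix (Fin N) (Fin K) ℝ := d⁻¹ • (Y * Bm) with hU
  set V : Matrix (Fin K) (Fin N) ℝ := Yᵀ with hV
  have hP : P = U * V := by
    rw [hU, hV, Matrix.smul_mul]
    ext i j
    have h3 : (Y * Bm * Yᵀ) i j = A i j := by
      rw [Matrix.mul_apply]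
      have h4 : ∀ l, (Y * Bm) i l = Bm (z i) l := by
        intro l
        rw [Matrix.mul_apply]
        simp [hY, hBm, Finset.sum_ite_eq, ite_mul, zero_mul, one_mul]
      simp only [h4, Matrix.transpose_apply, hY, Matrix.of_apply]
      simp [mul_ite, mul_one, mul_zero, Finset.sum_ite_eq', hBm, A, eq_comm]
      simp [Matrix.mul_apply, ite_mul, Finset.sum_ite_eq', Finset.sum_ite_eq]
    simp only [Matrix.smul_apply, h3, P, Matrix.of_apply, hrow i, smul_eq_mul]
    rw [div_eq_inv_mul]
  have hYtY : Yᵀ * Y = (s : ℝ) • (1 : Matrix (Fin K) (Fin K) ℝ) := by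
    ext k l
    rw [Matrix.mul_apply]
    have h5 : ∀ i, Yᵀ k i * Y i l = if z i = k ∧ z i = l then (1 : ℝ) else 0 := by
      intro i
      simp only [Matrix.transpose_apply, hY, Matrix.of_apply]
      by_cases h1' : z i = k <;> by_cases h2' : z i = l <;> simp [h1', h2']
    simp only [h5]
    rw [Finset.sum_boole]
    by_cases hkl : k = l
    · subst hkl
      have hfe : (Finset.univ.filter fun i => z i = k ∧ z i = k)
          = Finset.univ.filter (fun i => z i = k) := by
        apply Finset.filter_congr; intro i _; simp
      rw [hfe, hbal k]
      simp [Matrix.one_apply_eq]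
    · have : (Finset.univ.filter fun i => z i = k ∧ z i = l) = ∅ := by
        rw [Finset.filter_eq_empty_iff]
        rintro i - ⟨h1', h2'⟩
        exact hkl (h1' ▸ h2' ▸ rfl)
      simp [this, Matrix.one_apply_ne hkl, hkl]
  have hVU : V * U = (p * s / d) • (1 : Matrix (Fin K) (Fin K) ℝ)
      + (r * s / d) • Matrix.of (fun _ _ => (1 : ℝ)) := by
    rw [hV, hU, Matrix.mul_smul, ← Matrix.mul_assoc, hYtY, Matrix.smul_mul, one_mul, smul_smul]
    have hBsplit : Bm = p • (1 : Matrix (Fin K) (Fin K) ℝ)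
        + r • Matrix.of (fun _ _ => (1 : ℝ)) := by
      ext k l
      by_cases h : k = l <;> simp [hBm, Matrix.one_apply, h]
    rw [hBsplit, smul_add, smul_smul, smul_smul]
    congr 2 <;> ring_nf
  have hKN : K ≤ N := by
    rw [hN]; exact Nat.le_mul_of_pos_left K hs
  rw [hP, charpoly_prod_comm hKN, hVU, charpoly_const_add_ones hK]
  have hc1 : p * s / d + r * s / d * K = 1 := by
    field_simp
    rw [hd_def, hNR]; ring
  have hc2 : p * s / d = 1 / ((K : ℝ) * r / p + 1) := by
    rw [div_eq_div_iff hd.ne' (by positivity : ((K : ℝ) * r / p + 1) ≠ 0)]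
    rw [hd_def, hNR]
    field_simp
    ring
  rw [hc1, ← hc2]
  ring
end

section
/- Under the Stochastic Blockmodel with B = pI + rJ_{K×K}, 0 < r < p+r < 1, K blocks of equal size, and population anti-cluster weight matrix W̃ = (𝒜𝒜̄ + 𝒜̄𝒜)·𝒜, the second eigenvalues satisfy 0 < λ₂(P_W̃) < λ₂(P_𝒜) < 1, and moreover the gap λ₂(P_𝒜) − λ₂(P_W̃) depends only on K, p, r, not on the number of nodes N. -/
open Finset Matrix Polynomial

set_option synthInstance.maxHeartbeats 1000000
set_option maxHeartbeats 1000000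

lemma det_aux {F : Type*} [Field F] {K : ℕ} (hK : 0 < K) (α β : F) (hα : α ≠ 0) :
    Matrix.det (α • (1 : Matrix (Fin K) (Fin K) F) + β • Matrix.of (fun _ _ => (1:F)))
      = α ^ (K - 1) * (α + β * K) := by
  set cM : Matrix (Fin K) (Fin 1) F := Matrix.of (fun _ _ => (1:F)) with hcM
  set rM : Matrix (Fin 1) (Fin K) F := Matrix.of (fun _ _ => α⁻¹ * β) with hrM
  have key : α • (1 : Matrix (Fin K) (Fin K) F) + β • Matrix.of (fun _ _ => (1:F))
      = α • ((1 : Matrix (Fin K) (Fin K) F) + cM * rM) := by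
    rw [smul_add]
    congr 1
    ext i j
    simp [hcM, hrM, Matrix.mul_apply, mul_comm]
    field_simp
  rw [key, Matrix.det_smul, Matrix.det_one_add_mul_comm]
  have h2 : rM * cM = Matrix.of fun _ _ => α⁻¹ * β * K := by
    ext i j
    simp [hcM, hrM, Matrix.mul_apply, mul_comm]
  rw [h2]
  have h3 : Matrix.det ((1 : Matrix (Fin 1) (Fin 1) F) + Matrix.of fun _ _ => α⁻¹ * β * K)
      = 1 + α⁻¹ * β * K := by
    rw [Matrix.det_fin_one]
    simp
  rw [h3]
  have hKpow : α ^ K = α ^ (K - 1) * α := by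
    conv_lhs => rw [← Nat.succ_pred_eq_of_pos hK]
    rw [pow_succ]; rfl
  simp only [Fintype.card_fin]
  rw [hKpow]
  field_simp

set_option synthInstance.maxHeartbeats 1000000
set_option maxHeartbeats 1000000

lemma charpoly_blockConst {N K s : ℕ} (hK : 0 < K) (hs : 0 < s) (hN : N = s * K)
    (z : Fin N → Fin K) (hbal : ∀ k, (Finset.univ.filter (fun i => z i = k)).card = s)
    (a b : ℝ) :
    (Matrix.of fun i j => if z i = z j then a else b : Matrix (Fin N) (Fin N) ℝ).charpoly
      = (X - C ((s:ℝ) * (a + b * ((K:ℝ) - 1)))) * (X - C ((s:ℝ) * (a - b))) ^ (K - 1)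
          * X ^ (N - K) := by
  set M : Matrix (Fin N) (Fin N) ℝ := Matrix.of fun i j => if z i = z j then a else b with hM
  apply RatFunc.algebraMap_injective ℝ
  set φ : ℝ[X] →+* RatFunc ℝ := (algebraMap ℝ[X] (RatFunc ℝ) : ℝ[X] →+* RatFunc ℝ) with hφ
  set ψ : ℝ →+* RatFunc ℝ := φ.comp Polynomial.C with hψ
  set x : RatFunc ℝ := RatFunc.X with hxdef
  have hx : x ≠ 0 := RatFunc.X_ne_zero
  set a' : RatFunc ℝ := ψ a with ha'
  set b' : RatFunc ℝ := ψ b with hb'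
  set E : Matrix (Fin N) (Fin K) (RatFunc ℝ) :=
    Matrix.of (fun i k => if z i = k then 1 else 0) with hE
  set S : Matrix (Fin K) (Fin K) (RatFunc ℝ) :=
    Matrix.of (fun k l => if k = l then a' else b') with hS
  have hent : ∀ i j, (E * S * Eᵀ) i j = if z i = z j then a' else b' := by
    intro i j
    have h1 : ∀ l, (E * S) i l = S (z i) l := by
      intro l
      rw [Matrix.mul_apply]
      simp only [hE, of_apply, ite_mul, one_mul, zero_mul]
      simp [Finset.sum_ite_eq]
    rw [Matrix.mul_apply]
    simp only [h1, transpose_apply, hE, of_apply, mul_ite, mul_one, mul_zero]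
    simp [Finset.sum_ite_eq', hS]
    exact (h1 (z j)).trans (by simp [hS])
  -- LHS: map the charmatrix
  have hL : φ M.charpoly
      = Matrix.det (x • (1 : Matrix (Fin N) (Fin N) (RatFunc ℝ)) - E * S * Eᵀ) := by
    rw [Matrix.charpoly, RingHom.map_det]
    congr 1
    ext i j
    rw [RingHom.mapMatrix_apply, Matrix.map_apply]
    by_cases h : i = j
    · subst h
      rw [charmatrix_apply_eq, _root_.map_sub, Matrix.sub_apply, Matrix.smul_apply, one_apply_eq, smul_eq_mul,
        mul_one, hent]
      simp [hM, hψ, hφ, ha', hb', hxdef, RatFunc.algebraMap_X, RingHom.comp_apply]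
    · rw [charmatrix_apply_ne _ _ _ h, _root_.map_neg, Matrix.sub_apply, Matrix.smul_apply, one_apply_ne h,
        smul_eq_mul, mul_zero, zero_sub, hent, neg_inj]
      by_cases hz : z i = z j
      · simp [hM, hz, hψ, hφ, ha', hb', RingHom.comp_apply]
      · simp [hM, hz, hψ, hφ, ha', hb', RingHom.comp_apply]
  -- Eᵀ * E = s • 1
  have hEE : Eᵀ * E = (s : RatFunc ℝ) • (1 : Matrix (Fin K) (Fin K) (RatFunc ℝ)) := by
    ext k l
    simp only [Matrix.mul_apply, transpose_apply, hE, of_apply, Matrix.smul_apply, one_apply,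
      smul_eq_mul]
    by_cases h : k = l
    · subst h
      rw [if_pos rfl, mul_one]
      have hstep : ∀ w : Fin N,
          (if z w = k then (1:RatFunc ℝ) else 0) * (if z w = k then 1 else 0)
          = if z w = k then 1 else 0 := by
        intro w; split_ifs <;> ring
      rw [Finset.sum_congr rfl fun w _ => hstep w, Finset.sum_boole]
      simp [hbal k]
    · rw [if_neg h, mul_zero]
      apply Finset.sum_eq_zero
      intro w _
      split_ifs with h1 h2
      · exact absurd (h1 ▸ h2 : k = l) h
      · ring
      · ring
      · ring
  -- determinant computation
  have hNK : K ≤ N := by subst hN; exact Nat.le_mul_of_pos_left K hs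
  set α : RatFunc ℝ := 1 - (s : RatFunc ℝ) * (a' - b') * x⁻¹ with hα
  have he2 : x * α = x - (s : RatFunc ℝ) * (a' - b') := by
    rw [hα]; field_simp
  have hφXC : ∀ c : ℝ, φ (X - Polynomial.C c) = x - ψ c := by
    intro c
    simp [hφ, hψ, hxdef, _root_.map_sub, RatFunc.algebraMap_X, RingHom.comp_apply]
  have hXC_ne : ∀ c : ℝ, x - ψ c ≠ 0 := by
    intro c h0
    have h2 : (X - Polynomial.C c : ℝ[X]) = 0 := by
      apply RatFunc.algebraMap_injective ℝ
      rw [_root_.map_zero]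
      exact (hφXC c).trans h0
    exact Polynomial.X_sub_C_ne_zero c h2
  have hs1 : ψ ((s:ℝ) * (a - b)) = (s : RatFunc ℝ) * (a' - b') := by
    rw [_root_.map_mul, _root_.map_sub, _root_.map_natCast, ha', hb']
  have hs2 : ψ ((s:ℝ) * (a + b * ((K:ℝ) - 1)))
      = (s : RatFunc ℝ) * (a' + b' * ((K : RatFunc ℝ) - 1)) := by
    rw [_root_.map_mul, _root_.map_add, _root_.map_mul, _root_.map_sub, _root_.map_natCast, _root_.map_natCast, _root_.map_one, ha', hb']
  have hαne : α ≠ 0 := by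
    intro h0
    apply hXC_ne ((s:ℝ) * (a - b))
    rw [hs1, ← he2, h0, mul_zero]
  have hfac : x • (1 : Matrix (Fin N) (Fin N) (RatFunc ℝ)) - E * S * Eᵀ
      = x • ((1 : Matrix (Fin N) (Fin N) (RatFunc ℝ)) + E * ((-x⁻¹) • S) * Eᵀ) := by
    rw [smul_add]
    rw [Matrix.mul_smul, Matrix.smul_mul, smul_smul, mul_neg, mul_inv_cancel₀ hx, neg_smul,
      one_smul]
    exact sub_eq_add_neg _ _
  rw [hL, hfac, Matrix.det_smul, Matrix.det_one_add_mul_comm]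
  have h3 : Eᵀ * (E * ((-x⁻¹) • S)) = (-((s:RatFunc ℝ) * x⁻¹)) • S := by
    rw [← Matrix.mul_assoc, hEE, Matrix.smul_mul, Matrix.mul_smul, Matrix.one_mul, smul_smul]
    congr 1
    ring
  rw [h3]
  have hform : (1 : Matrix (Fin K) (Fin K) (RatFunc ℝ)) + (-((s:RatFunc ℝ) * x⁻¹)) • S
      = α • (1 : Matrix (Fin K) (Fin K) (RatFunc ℝ))
        + (-((s:RatFunc ℝ) * x⁻¹ * b')) • Matrix.of (fun _ _ => (1:RatFunc ℝ)) := by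
    ext k l
    by_cases h : k = l
    · subst h
      simp [hS, hα, Matrix.one_apply]
      try ring
    · simp [hS, hα, Matrix.one_apply, h]
      try ring
  rw [hform, det_aux hK _ _ hαne]
  rw [_root_.map_mul, _root_.map_mul, _root_.map_pow, _root_.map_pow, hφXC, hφXC, hs1, hs2]
  have hφX : φ X = x := by rw [hφ, hxdef]; exact RatFunc.algebraMap_X
  rw [hφX, Fintype.card_fin]
  have hxN : (x : RatFunc ℝ) ^ N = x ^ (N - K) * x ^ (K - 1) * x := by
    rw [← pow_add, ← pow_succ]
    congr 1
    omega
  have he1 : x * (α + (-((s:RatFunc ℝ) * x⁻¹ * b')) * K)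
      = x - (s : RatFunc ℝ) * (a' + b' * ((K : RatFunc ℝ) - 1)) := by
    rw [hα]; field_simp; ring
  rw [hxN, ← he1, ← he2, mul_pow]
  ring


/-- Population spectral gap result: under a balanced `K`-block SBM with
`B = pI + rJ`, `0 < r < p + r < 1`, the second eigenvalues satisfy
`0 < λ₂(P_W̃) < λ₂(P_𝒜) < 1`; moreover `λ₂(P_𝒜) = ν` and `λ₂(P_W̃) = μ` are
explicit functions of `K, p, r` only (independent of `N`), so the gap
`λ₂(P_𝒜) - λ₂(P_W̃)` does not depend on `N`. The eigenvalue identities are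
encoded via characteristic polynomials. -/
theorem stmt6 {N K s : ℕ} (hK : 2 ≤ K) (hs : 0 < s) (hN : N = s * K)
    (z : Fin N → Fin K)
    (hbal : ∀ k, (Finset.univ.filter (fun i => z i = k)).card = s)
    (p r : ℝ) (hr : 0 < r) (hpr : r < p + r) (h1 : p + r < 1) :
    let A : Matrix (Fin N) (Fin N) ℝ :=
      Matrix.of fun i j => (if z i = z j then p else 0) + r
    let Abar : Matrix (Fin N) (Fin N) ℝ := (Matrix.of fun _ _ => (1 : ℝ)) - A
    let W : Matrix (Fin N) (Fin N) ℝ :=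
      Matrix.hadamard (A * Abar + Abar * A) A
    let PA : Matrix (Fin N) (Fin N) ℝ :=
      Matrix.of fun i j => A i j / (∑ w, A i w)
    let PW : Matrix (Fin N) (Fin N) ℝ :=
      Matrix.of fun i j => W i j / (∑ w, W i w)
    -- explicit second eigenvalues, functions of K, p, r only:
    let u : ℝ := (1 - r) * r * K + (1 - r) * p - p * r
    let ν : ℝ := 1 / ((K : ℝ) * r / p + 1)
    let μ : ℝ := 1 / ((K : ℝ) * (u * r / (p * (u - r * p - p ^ 2))) + 1)
    PA.charpoly = (X - C 1) * (X - C ν) ^ (K - 1) * X ^ (N - K) ∧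
    PW.charpoly = (X - C 1) * (X - C μ) ^ (K - 1) * X ^ (N - K) ∧
    0 < μ ∧ μ < ν ∧ ν < 1 := by
  intro A Abar W PA PW u ν μ
  have hK0 : 0 < K := by omega
  have hp : 0 < p := by linarith
  have ht2 : (2:ℝ) ≤ (K:ℝ) := by exact_mod_cast hK
  have hNR : (N:ℝ) = (s:ℝ) * (K:ℝ) := by exact_mod_cast congrArg Nat.cast hN
  have hsR : (0:ℝ) < (s:ℝ) := by exact_mod_cast hs
  have hudef : u = (1 - r) * r * K + (1 - r) * p - p * r := rfl
  set v : ℝ := u - r * p - p ^ 2 with hvdef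
  have hv : 0 < v := by
    rw [hvdef, hudef]
    have h1r : 0 < 1 - r - p := by linarith
    nlinarith [mul_pos hr h1r, mul_pos hp h1r, mul_nonneg (mul_nonneg hr.le h1r.le) (by linarith : (0:ℝ) ≤ (K:ℝ) - 2)]
  have hu : 0 < u := by
    have h2 : u = v + r * p + p ^ 2 := by rw [hvdef]; ring
    rw [h2]
    nlinarith [mul_pos hr hp, sq_nonneg p, hv]
  -- counting lemmas
  have hcount : ∀ (k : Fin K) (c : ℝ), (∑ w : Fin N, if z w = k then c else 0) = s * c := by
    intro k c
    rw [← Finset.sum_filter, Finset.sum_const, hbal k, nsmul_eq_mul]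
  have hcount2 : ∀ (k l : Fin K) (c : ℝ),
      (∑ w : Fin N, if z w = k ∧ z w = l then c else 0) = if k = l then (s:ℝ) * c else 0 := by
    intro k l c
    by_cases h : k = l
    · subst h
      rw [if_pos rfl, ← hcount k c]
      congr 1; ext w
      simp [and_self]
    · rw [if_neg h]
      apply Finset.sum_eq_zero
      intro w _
      rw [if_neg]
      rintro ⟨h1, h2⟩
      exact h (h1 ▸ h2 ▸ rfl)
  -- row sums of A
  have hA : ∀ i j, A i j = (if z i = z j then p else 0) + r := fun i j => rfl
  have hrowA : ∀ i : Fin N, ∑ w, A i w = (s:ℝ) * p + (N:ℝ) * r := by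
    intro i
    have : ∀ w, A i w = (if z w = z i then p else 0) + r := by
      intro w
      rw [hA]
      by_cases h : z i = z w
      · rw [if_pos h, if_pos h.symm]
      · rw [if_neg h, if_neg (fun hh => h hh.symm)]
    rw [Finset.sum_congr rfl fun w _ => this w, Finset.sum_add_distrib, hcount,
      Finset.sum_const, Finset.card_univ, Fintype.card_fin, nsmul_eq_mul]
  -- PA in block-constant form
  set DA : ℝ := (s:ℝ) * p + (N:ℝ) * r with hDA
  have hDApos : 0 < DA := by
    rw [hDA, hNR]
    have : (0:ℝ) < (K:ℝ) := by linarith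
    nlinarith [mul_pos hsR hp, mul_pos (mul_pos hsR this) hr]
  have hPA : PA = Matrix.of fun i j => if z i = z j then (p + r) / DA else r / DA := by
    ext i j
    show A i j / (∑ w, A i w) = _
    rw [hrowA i, hA]
    by_cases h : z i = z j <;> simp [h]
  -- products A*Abar and Abar*A
  have hAbar : ∀ i j, Abar i j = (1:ℝ) - ((if z i = z j then p else 0) + r) := fun i j => rfl
  have hhelp : ∀ k l : Fin K,
      (∑ w : Fin N, ((if z w = k then p else 0) + r) * ((1 - r) - (if z w = l then p else 0)))
        = (s:ℝ) * u - (s:ℝ) * p ^ 2 * (if k = l then 1 else 0) := by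
    intro k l
    have hpt : ∀ w : Fin N,
        ((if z w = k then p else 0) + r) * ((1 - r) - (if z w = l then p else 0))
          = (if z w = k then p * (1-r) else 0) - (if z w = k ∧ z w = l then p^2 else 0)
            - (if z w = l then r * p else 0) + r * (1 - r) := by
      intro w
      by_cases hk : z w = k <;> by_cases hl : z w = l
      · have hkl : k = l := by rw [← hk, hl]
        simp [hk, hl, hkl]; ring
      · have hkl : ¬ (k = l) := by rintro rfl; exact hl hk
        have hkl' : ¬ (l = k) := fun h => hkl h.symm
        simp [hk, hl, hkl, hkl']; try ring
      · have hkl : ¬ (k = l) := by rintro rfl; exact hk hl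
        have hkl' : ¬ (l = k) := fun h => hkl h.symm
        simp [hk, hl, hkl, hkl']; try ring
      · simp [hk, hl]; try ring
    rw [Finset.sum_congr rfl fun w _ => hpt w]
    rw [Finset.sum_add_distrib, Finset.sum_sub_distrib, Finset.sum_sub_distrib,
      hcount, hcount2, hcount, Finset.sum_const, Finset.card_univ, Fintype.card_fin,
      nsmul_eq_mul]
    show (s:ℝ) * (p * (1-r)) - (if k = l then (s:ℝ) * p^2 else 0) - (s:ℝ) * (r*p)
        + (N:ℝ) * (r * (1-r)) = _
    rw [hNR]
    rw [hudef]
    by_cases h : k = l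
    · simp only [h, if_true]; ring
    · simp only [if_neg h]; ring
  have hprod1 : ∀ i j, (A * Abar) i j
      = (s:ℝ) * u - (s:ℝ) * p ^ 2 * (if z i = z j then 1 else 0) := by
    intro i j
    show (∑ w, A i w * Abar w j) = _
    have : ∀ w, A i w * Abar w j
        = ((if z w = z i then p else 0) + r) * ((1 - r) - (if z w = z j then p else 0)) := by
      intro w
      rw [hA, hAbar]
      by_cases h : z i = z w
      · rw [if_pos h, if_pos h.symm]; ring
      · rw [if_neg h, if_neg (show ¬ (z w = z i) from fun hh => h hh.symm)]; ring
    rw [Finset.sum_congr rfl fun w _ => this w, hhelp (z i) (z j)]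
  have hprod2 : ∀ i j, (Abar * A) i j
      = (s:ℝ) * u - (s:ℝ) * p ^ 2 * (if z i = z j then 1 else 0) := by
    intro i j
    show (∑ w, Abar i w * A w j) = _
    have : ∀ w, Abar i w * A w j
        = ((if z w = z j then p else 0) + r) * ((1 - r) - (if z w = z i then p else 0)) := by
      intro w
      rw [hA, hAbar]
      by_cases h : z i = z w
      · rw [if_pos h, if_pos h.symm]; ring
      · rw [if_neg h, if_neg (show ¬ (z w = z i) from fun hh => h hh.symm)]; ring
    rw [Finset.sum_congr rfl fun w _ => this w, hhelp (z j) (z i)]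
    by_cases h : z i = z j
    · rw [if_pos h, if_pos h.symm]
    · rw [if_neg (fun hh => h hh.symm), if_neg h]
  set aw : ℝ := 2 * (s:ℝ) * (u - p^2) * (p + r) with haw
  set bw : ℝ := 2 * (s:ℝ) * u * r with hbw
  have hW : ∀ i j, W i j = if z i = z j then aw else bw := by
    intro i j
    show ((A * Abar) i j + (Abar * A) i j) * A i j = _
    rw [hprod1, hprod2, hA]
    by_cases h : z i = z j
    · simp only [if_pos h, haw, hbw]; ring
    · simp only [if_neg h, haw, hbw]; ring
  set DW : ℝ := (s:ℝ) * (aw - bw) + (N:ℝ) * bw with hDW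
  have hrowW : ∀ i : Fin N, ∑ w, W i w = DW := by
    intro i
    have : ∀ w, W i w = (if z w = z i then aw - bw else 0) + bw := by
      intro w
      rw [hW]
      by_cases h : z i = z w
      · rw [if_pos h, if_pos h.symm]; ring
      · rw [if_neg h, if_neg (fun hh => h hh.symm)]; ring
    rw [Finset.sum_congr rfl fun w _ => this w, Finset.sum_add_distrib, hcount,
      Finset.sum_const, Finset.card_univ, Fintype.card_fin, nsmul_eq_mul, hDW]
  have hDWval : DW = 2 * (s:ℝ)^2 * (p * v + (K:ℝ) * u * r) := by
    rw [hDW, haw, hbw, hNR, hvdef]; ring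
  have hpv : 0 < p * v := mul_pos hp hv
  have hKur : 0 < (K:ℝ) * u * r := by positivity
  have hDWpos : 0 < DW := by rw [hDWval]; positivity
  have hPW : PW = Matrix.of fun i j => if z i = z j then aw / DW else bw / DW := by
    ext i j
    show W i j / (∑ w, W i w) = _
    rw [hrowW i, hW]
    by_cases h : z i = z j <;> simp [h]
  -- charpoly of PA
  have hchA : PA.charpoly = (X - C 1) * (X - C ν) ^ (K - 1) * X ^ (N - K) := by
    rw [hPA, charpoly_blockConst hK0 hs hN z hbal]
    have e1 : (s:ℝ) * ((p + r) / DA + r / DA * ((K:ℝ) - 1)) = 1 := by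
      rw [hDA, hNR]
      field_simp
      ring
    have e2 : (s:ℝ) * ((p + r) / DA - r / DA) = ν := by
      show _ = 1 / ((K : ℝ) * r / p + 1)
      rw [hDA, hNR]
      have hd : (0:ℝ) < (K:ℝ) * r / p + 1 := by positivity
      field_simp
      ring
    rw [e1, e2]
  have hchW : PW.charpoly = (X - C 1) * (X - C μ) ^ (K - 1) * X ^ (N - K) := by
    rw [hPW, charpoly_blockConst hK0 hs hN z hbal]
    have hDWne : DW ≠ 0 := ne_of_gt hDWpos
    have e1 : (s:ℝ) * (aw / DW + bw / DW * ((K:ℝ) - 1)) = 1 := by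
      have : (s:ℝ) * (aw / DW + bw / DW * ((K:ℝ) - 1)) = ((s:ℝ) * (aw - bw) + (N:ℝ) * bw) / DW := by
        rw [hNR]; field_simp; ring
      rw [this, ← hDW, div_self hDWne]
    have e2 : (s:ℝ) * (aw / DW - bw / DW) = μ := by
      show _ = 1 / ((K : ℝ) * (u * r / (p * v)) + 1)
      have hlhs : (s:ℝ) * (aw / DW - bw / DW) = (s:ℝ) * (aw - bw) / DW := by
        field_simp
      rw [hlhs, hDWval, haw, hbw, hvdef]
      have hpvne : p * (u - r * p - p ^ 2) ≠ 0 := by rw [← hvdef]; exact ne_of_gt hpv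
      have hdne : (K:ℝ) * (u * r / (p * (u - r * p - p ^ 2))) + 1 ≠ 0 := by
        rw [← hvdef]
        have : 0 < (K:ℝ) * (u * r / (p * v)) + 1 := by positivity
        exact ne_of_gt this
      rw [← hvdef]
      field_simp
      ring
    rw [e1, e2]
  refine ⟨hchA, hchW, ?_, ?_, ?_⟩
  · show 0 < 1 / ((K : ℝ) * (u * r / (p * (u - r * p - p ^ 2))) + 1)
    rw [← hvdef]
    positivity
  · show 1 / ((K : ℝ) * (u * r / (p * (u - r * p - p ^ 2))) + 1) < 1 / ((K : ℝ) * r / p + 1)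
    rw [← hvdef]
    have hd1 : (0:ℝ) < (K:ℝ) * r / p + 1 := by positivity
    apply one_div_lt_one_div_of_lt hd1
    have : r / p < u * r / (p * v) := by
      rw [div_lt_div_iff₀ hp (by positivity)]
      have : v < u := by rw [hvdef]; nlinarith [mul_pos hr hp, sq_nonneg p, mul_pos hp hp]
      nlinarith [mul_pos hr hp, mul_pos hp hp, mul_pos (mul_pos hr hp) hp]
    have hKpos : (0:ℝ) < (K:ℝ) := by linarith
    have h2 : (K:ℝ) * (r / p) < (K:ℝ) * (u * r / (p * v)) :=
      (mul_lt_mul_iff_right₀ hKpos).2 this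
    calc (K:ℝ) * r / p + 1 = (K:ℝ) * (r / p) + 1 := by ring
    _ < (K:ℝ) * (u * r / (p * v)) + 1 := by linarith
  · show 1 / ((K : ℝ) * r / p + 1) < 1
    rw [div_lt_one (by positivity)]
    have : 0 < (K:ℝ) * r / p := by positivity
    linarith
end

section
/- Under the Stochastic Blockmodel with B = pI + rJ_{K×K}, equal block sizes, write B̃ = (BΘB̄ + B̄ΘB)·B with Θ = (N/K)I. Then B̃ = p̃I + r̃J where p̃ = 2p(N/K)(u − rp − p²), r̃ = 2(N/K)ur, and u = (1−r)rK + (1−r)p − pr. Consequently, in the asymptotic regime where K → ∞ and r → 0 with p and R = Kr/p fixed, λ₂(P_W̃) → 1/(cR + 1) with c = (R+1)/(R+1−p). -/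
open Finset Matrix Polynomial

/-- Block-level identity `B̃ = (BΘB̄ + B̄ΘB)·B = p̃I + r̃J` with
`p̃ = 2p(N/K)(u - rp - p²)`, `r̃ = 2(N/K)ur`, `u = (1-r)rK + (1-r)p - pr`;
and in the asymptotic regime `K → ∞`, `r = Rp/K → 0` with `p` and `R = Kr/p`
fixed, `λ₂(P_W̃) = 1/(K(r̃/p̃) + 1) → 1/(cR + 1)` with `c = (R+1)/(R+1-p)`. -/
theorem stmt7 {N K : ℕ} (hK : 0 < K)
    (p r R : ℝ) (hr : 0 < r) (hpr : r < p + r) (h1 : p + r < 1)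
    (hp1 : 0 < p) (hp2 : p < 1) (hR : 0 < R) :
    (let B : Matrix (Fin K) (Fin K) ℝ :=
      Matrix.of fun k l => (if k = l then p else 0) + r
    let Bbar : Matrix (Fin K) (Fin K) ℝ := (Matrix.of fun _ _ => (1 : ℝ)) - B
    let m : ℝ := (N : ℝ) / K
    let Θ : Matrix (Fin K) (Fin K) ℝ := Matrix.diagonal fun _ => m
    let u : ℝ := (1 - r) * r * K + (1 - r) * p - p * r
    let pt : ℝ := 2 * p * m * (u - r * p - p ^ 2)
    let rt : ℝ := 2 * m * u * r
    Matrix.hadamard (B * Θ * Bbar + Bbar * Θ * B) B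
      = Matrix.of fun k l => (if k = l then pt else 0) + rt) ∧
    Filter.Tendsto
      (fun K' : ℕ =>
        let r' : ℝ := R * p / K'
        let u' : ℝ := (1 - r') * r' * K' + (1 - r') * p - p * r'
        1 / ((K' : ℝ) * (u' * r' / (p * (u' - r' * p - p ^ 2))) + 1))
      Filter.atTop
      (nhds (1 / ((R + 1) / (R + 1 - p) * R + 1))) := by
  constructor
  · ext k l
    by_cases h : k = l
    · simp [Matrix.hadamard, Matrix.mul_apply, Matrix.diagonal, Matrix.sub_apply, h,
        Finset.sum_add_distrib, Finset.mul_sum, Finset.sum_mul, mul_ite, ite_mul,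
        mul_sub, sub_mul, mul_add, add_mul, Finset.sum_sub_distrib, Finset.sum_ite_eq,
        Finset.sum_ite_eq', Finset.card_univ]
      ring
    · simp [Matrix.hadamard, Matrix.mul_apply, Matrix.diagonal, Matrix.sub_apply, h, Ne.symm h,
        Finset.sum_add_distrib, Finset.mul_sum, Finset.sum_mul, mul_ite, ite_mul,
        mul_sub, sub_mul, mul_add, add_mul, Finset.sum_sub_distrib, Finset.sum_ite_eq,
        Finset.sum_ite_eq', Finset.card_univ]
      ring
  · have hp0 : p ≠ 0 := ne_of_gt hp1
    have hc : 0 < R + 1 - p := by linarith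
    set s : ℕ → ℝ := fun n => R * p / n with hs
    have h0 : Filter.Tendsto s Filter.atTop (nhds 0) :=
      tendsto_const_div_atTop_nhds_zero_nat _
    set v : ℕ → ℝ := fun n => (1 - s n) * (R * p) + (1 - s n) * p - p * s n with hv
    have h1s : Filter.Tendsto (fun n => 1 - s n) Filter.atTop (nhds 1) := by
      simpa using tendsto_const_nhds.sub h0
    have hu : Filter.Tendsto v Filter.atTop (nhds (R * p + p)) := by
      have := ((h1s.mul (tendsto_const_nhds (x := R * p))).add
        (h1s.mul (tendsto_const_nhds (x := p)))).sub ((tendsto_const_nhds (x := p)).mul h0)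
      simpa using this
    have hdenne : p * (R * p + p - 0 * p - p ^ 2) ≠ 0 := by
      have : p * (R * p + p - 0 * p - p ^ 2) = p ^ 2 * (R + 1 - p) := by ring
      rw [this]; positivity
    have hinner : Filter.Tendsto (fun n => v n * (R * p) / (p * (v n - s n * p - p ^ 2)))
        Filter.atTop (nhds ((R * p + p) * (R * p) / (p * (R * p + p - 0 * p - p ^ 2)))) := by
      exact (hu.mul tendsto_const_nhds).div
        (tendsto_const_nhds.mul ((hu.sub (h0.mul tendsto_const_nhds)).sub tendsto_const_nhds))
        hdenne
    have h1' : (R * p + p) * (R * p) / (p * (R * p + p - 0 * p - p ^ 2))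
        = R * (R + 1) / (R + 1 - p) := by
      rw [div_eq_div_iff hdenne hc.ne']; ring
    have hLne : (R * p + p) * (R * p) / (p * (R * p + p - 0 * p - p ^ 2)) + 1 ≠ 0 := by
      rw [h1']; positivity
    have hfin : Filter.Tendsto (fun n => 1 / (v n * (R * p) / (p * (v n - s n * p - p ^ 2)) + 1))
        Filter.atTop
        (nhds (1 / ((R * p + p) * (R * p) / (p * (R * p + p - 0 * p - p ^ 2)) + 1))) :=
      tendsto_const_nhds.div (hinner.add tendsto_const_nhds) hLne
    have hval : 1 / ((R * p + p) * (R * p) / (p * (R * p + p - 0 * p - p ^ 2)) + 1)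
        = 1 / ((R + 1) / (R + 1 - p) * R + 1) := by
      rw [h1']; congr 1; ring
    rw [← hval]
    refine Filter.Tendsto.congr' ?_ hfin
    filter_upwards [Filter.eventually_ge_atTop 1] with n hn
    have hn0 : (n : ℝ) ≠ 0 := Nat.cast_ne_zero.mpr (by omega)
    have hsn : R * p / (n:ℝ) * n = R * p := div_mul_cancel₀ _ hn0
    simp only [hs, hv]
    rw [show (1 - R*p/(n:ℝ)) * (R*p/(n:ℝ)) * (n:ℝ) = (1 - R*p/(n:ℝ)) * (R*p) by
      rw [mul_assoc, hsn]]
    generalize (1 - R*p/(n:ℝ)) * (R*p) + (1 - R*p/(n:ℝ)) * p - p * (R*p/(n:ℝ)) = V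
    generalize p * (V - R*p/(n:ℝ)*p - p^2) = D
    rw [show (n:ℝ) * (V * (R*p/(n:ℝ)) / D) = V * (R*p/(n:ℝ)*(n:ℝ)) / D by ring, hsn]
end

section
/- Under the Stochastic Blockmodel with B = pI + rJ_{K×K}, 0 < r < p+r < 1, equal block sizes, let u, v be two nodes in the same block. Then the anti-cluster transition probability is strictly smaller than the simple random walk transition probability: P_W̃(u,v) < P_𝒜(u,v); moreover, for w in a different block from u, P_W̃(u,w) > P_𝒜(u,w). -/
open Finset Matrix

/-- Under a balanced `K`-block SBM with `B = pI + rJ`, `0 < r < p + r < 1`,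
anti-cluster sampling strictly decreases the in-block transition probability
and strictly increases the out-of-block transition probability:
for `z u = z v`, `P_W̃(u,v) < P_𝒜(u,v)`, and for `z u ≠ z w`,
`P_W̃(u,w) > P_𝒜(u,w)`. -/
theorem stmt13 {N K s : ℕ} (hK : 2 ≤ K) (hs : 0 < s) (hN : N = s * K)
    (z : Fin N → Fin K)
    (hbal : ∀ k, (Finset.univ.filter (fun i => z i = k)).card = s)
    (p r : ℝ) (hr : 0 < r) (hpr : r < p + r) (h1 : p + r < 1) :
    let A : Matrix (Fin N) (Fin N) ℝ :=
      Matrix.of fun i j => (if z i = z j then p else 0) + r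
    let Abar : Matrix (Fin N) (Fin N) ℝ := (Matrix.of fun _ _ => (1 : ℝ)) - A
    let W : Matrix (Fin N) (Fin N) ℝ :=
      Matrix.hadamard (A * Abar + Abar * A) A
    let PA : Matrix (Fin N) (Fin N) ℝ :=
      Matrix.of fun i j => A i j / (∑ w, A i w)
    let PW : Matrix (Fin N) (Fin N) ℝ :=
      Matrix.of fun i j => W i j / (∑ w, W i w)
    ∀ u v w : Fin N,
      (z u = z v → PW u v < PA u v) ∧
      (z u ≠ z w → PW u w > PA u w) := by
  intro A Abar W PA PW u v w
  have hp : 0 < p := by linarith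
  have hK' : (2:ℝ) ≤ K := by exact_mod_cast hK
  have hs' : (0:ℝ) < s := by exact_mod_cast hs
  have hN' : (N:ℝ) = s * K := by rw [hN]; push_cast; ring
  have hsN : s ≤ N := by
    rw [hN]; exact Nat.le_mul_of_pos_right s (by omega)
  have hsN' : (s:ℝ) ≤ N := by exact_mod_cast hsN
  have hNs2 : 2*(s:ℝ) ≤ N := by nlinarith
  have hNspos : 0 < (N:ℝ) - s := by nlinarith
  -- basic entry facts
  have hAe : ∀ i j, A i j = (if z i = z j then p else 0) + r := fun _ _ => rfl
  have hAbe : ∀ i j, Abar i j = 1 - A i j := by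
    intro i j
    show (1:ℝ) - A i j = 1 - A i j
    rfl
  have hWe : ∀ i j, W i j = ((A * Abar) i j + (Abar * A) i j) * A i j := fun _ _ => rfl
  -- sum lemmas
  have hsum : ∀ (i : Fin N) (c d : ℝ),
      (∑ j, if z i = z j then c else d) = s * c + ((N:ℝ) - s) * d := by
    intro i c d
    rw [Finset.sum_ite, Finset.sum_const, Finset.sum_const]
    have h1' : (Finset.univ.filter fun j => z i = z j).card = s := by
      rw [← hbal (z i)]; congr 1; ext j; simp [eq_comm]
    have h2' : (Finset.univ.filter fun j => ¬ z i = z j).card = N - s := by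
      have h3 := Finset.card_filter_add_card_filter_not
        (s := (Finset.univ : Finset (Fin N))) (p := fun j => z i = z j)
      simp only [Finset.card_univ, Fintype.card_fin] at h3
      omega
    rw [h1', h2', nsmul_eq_mul, nsmul_eq_mul]
    have : ((N - s : ℕ) : ℝ) = (N:ℝ) - s := by
      push_cast [Nat.cast_sub hsN]; ring
    rw [this]
  have hsum' : ∀ (j : Fin N) (c d : ℝ),
      (∑ k, if z k = z j then c else d) = s * c + ((N:ℝ) - s) * d := by
    intro j c d
    rw [← hsum j c d]
    exact Finset.sum_congr rfl (fun k _ => by simp [eq_comm])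
  -- A*A entries
  have hAA : ∀ i j, (A * A) i j =
      if z i = z j then p^2*s + 2*p*r*s + r^2*N else 2*p*r*s + r^2*N := by
    intro i j
    rw [Matrix.mul_apply]
    simp only [hAe]
    by_cases h : z i = z j
    · have step : ∀ k, ((if z i = z k then p else 0) + r) * ((if z k = z j then p else 0) + r)
          = if z i = z k then (p+r)*(p+r) else r*r := by
        intro k
        by_cases hk : z i = z k
        · simp [hk, hk.symm.trans h]
        · have : ¬ z k = z j := fun hc => hk (h.trans hc.symm)
          simp [hk, this]
      rw [Finset.sum_congr rfl (fun k _ => step k), hsum, if_pos h]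
      ring
    · have step : ∀ k, ((if z i = z k then p else 0) + r) * ((if z k = z j then p else 0) + r)
          = r * (if z i = z k then p else 0) + r * (if z k = z j then p else 0) + r*r := by
        intro k
        by_cases hk : z i = z k
        · have hkj : ¬ z k = z j := fun hc => h (hk.trans hc)
          rw [if_pos hk, if_neg hkj]; ring
        · by_cases hk' : z k = z j
          · rw [if_neg hk, if_pos hk']; ring
          · rw [if_neg hk, if_neg hk']; ring
      rw [Finset.sum_congr rfl (fun k _ => step k)]
      rw [Finset.sum_add_distrib, Finset.sum_add_distrib, ← Finset.mul_sum, ← Finset.mul_sum,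
        hsum, hsum', Finset.sum_const, Finset.card_univ, Fintype.card_fin, nsmul_eq_mul,
        if_neg h]
      ring
  -- row sums of A
  have hrowA : ∀ i, ∑ j, A i j = s*(p+r) + ((N:ℝ)-s)*r := by
    intro i
    have : ∀ j, A i j = if z i = z j then (p+r) else r := by
      intro j; rw [hAe]; by_cases h : z i = z j <;> simp [h]
    rw [Finset.sum_congr rfl (fun j _ => this j), hsum]
  have hcolA : ∀ j, ∑ k, A k j = s*(p+r) + ((N:ℝ)-s)*r := by
    intro j
    have : ∀ k, A k j = if z k = z j then (p+r) else r := by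
      intro k; rw [hAe]; by_cases h : z k = z j <;> simp [h]
    rw [Finset.sum_congr rfl (fun k _ => this k), hsum']
  -- A * Abar entries
  have hAAb : ∀ i j, (A * Abar) i j = (s*(p+r) + ((N:ℝ)-s)*r) - (A*A) i j := by
    intro i j
    rw [Matrix.mul_apply]
    have : ∀ k, A i k * Abar k j = A i k - A i k * A k j := by
      intro k; rw [hAbe]; ring
    rw [Finset.sum_congr rfl (fun k _ => this k), Finset.sum_sub_distrib, hrowA,
      Matrix.mul_apply]
  have hAbA : ∀ i j, (Abar * A) i j = (s*(p+r) + ((N:ℝ)-s)*r) - (A*A) i j := by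
    intro i j
    rw [Matrix.mul_apply]
    have : ∀ k, Abar i k * A k j = A k j - A i k * A k j := by
      intro k; rw [hAbe]; ring
    rw [Finset.sum_congr rfl (fun k _ => this k), Finset.sum_sub_distrib, hcolA,
      Matrix.mul_apply]
  -- W entries
  have hWite : ∀ i j, W i j =
      if z i = z j
      then (2*(s*(p+r) + ((N:ℝ)-s)*r) - 2*(p^2*s + 2*p*r*s + r^2*N)) * (p+r)
      else (2*(s*(p+r) + ((N:ℝ)-s)*r) - 2*(2*p*r*s + r^2*N)) * r := by
    intro i j
    rw [hWe, hAAb, hAbA, hAA, hAe]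
    by_cases h : z i = z j
    · simp only [if_pos h]; ring
    · simp only [if_neg h]; ring
  set cin : ℝ := (2*(s*(p+r) + ((N:ℝ)-s)*r) - 2*(p^2*s + 2*p*r*s + r^2*N)) * (p+r) with hcin
  set cout : ℝ := (2*(s*(p+r) + ((N:ℝ)-s)*r) - 2*(2*p*r*s + r^2*N)) * r with hcout
  have hrowW : ∀ i, ∑ j, W i j = s * cin + ((N:ℝ)-s) * cout := by
    intro i
    rw [Finset.sum_congr rfl (fun j _ => hWite i j), hsum]
  -- positivity
  have hcinpos : 0 < cin := by
    rw [hcin]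
    have h2 : 0 < 2*(s*(p+r) + ((N:ℝ)-s)*r) - 2*(p^2*s + 2*p*r*s + r^2*N) := by
      have e : 2*(s*(p+r) + ((N:ℝ)-s)*r) - 2*(p^2*s + 2*p*r*s + r^2*N)
          = 2*(s*(p+r)*(1-(p+r)) + ((N:ℝ)-s)*r*(1-r)) := by ring
      rw [e]
      have t1 : 0 < (s:ℝ)*(p+r)*(1-(p+r)) :=
        mul_pos (mul_pos hs' (by linarith)) (by linarith)
      have t2 : 0 ≤ ((N:ℝ)-s)*r*(1-r) := by
        apply mul_nonneg (mul_nonneg (by linarith) hr.le); linarith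
      linarith
    exact mul_pos h2 (by linarith)
  have hcoutpos : 0 < cout := by
    rw [hcout]
    have h2 : 0 < 2*(s*(p+r) + ((N:ℝ)-s)*r) - 2*(2*p*r*s + r^2*N) := by
      have e : 2*(s*(p+r) + ((N:ℝ)-s)*r) - 2*(2*p*r*s + r^2*N)
          = 2*(s*(p+r)*(1-r) + s*r*(1-(p+r)) + ((N:ℝ)-2*s)*r*(1-r)) := by ring
      rw [e]
      have t1 : 0 < (s:ℝ)*(p+r)*(1-r) :=
        mul_pos (mul_pos hs' (by linarith)) (by linarith)
      have t2 : 0 ≤ (s:ℝ)*r*(1-(p+r)) := by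
        apply mul_nonneg (mul_nonneg hs'.le hr.le); linarith
      have t3 : 0 ≤ ((N:ℝ)-2*s)*r*(1-r) := by
        apply mul_nonneg (mul_nonneg (by linarith) hr.le); linarith
      linarith
    exact mul_pos h2 hr
  have hdApos : 0 < s*(p+r) + ((N:ℝ)-s)*r := by
    have h0 : 0 < (s:ℝ)*(p+r) := mul_pos hs' (by linarith)
    nlinarith
  have hdWpos : 0 < s * cin + ((N:ℝ)-s) * cout := by
    have h0 : 0 < (s:ℝ) * cin := mul_pos hs' hcinpos
    nlinarith [mul_nonneg hNspos.le hcoutpos.le]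
  -- key scalar inequality
  have hkey : r * cin < (p+r) * cout := by
    have e : (p+r) * cout - r * cin = 2*r*(p+r)*p^2*s := by
      rw [hcin, hcout]; ring
    nlinarith [mul_pos (mul_pos (mul_pos (mul_pos (by linarith : (0:ℝ) < 2) hr)
      (by linarith : (0:ℝ) < p+r)) (pow_pos hp 2)) hs']
  constructor
  · intro huv
    show W u v / (∑ j, W u j) < A u v / (∑ j, A u j)
    rw [hrowW, hrowA, hWite, hAe, if_pos huv, if_pos huv]
    rw [div_lt_div_iff₀ hdWpos hdApos]
    have e : ((p+r)) * (s * cin + ((N:ℝ)-s) * cout) - cin * (s*(p+r) + ((N:ℝ)-s)*r)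
        = ((N:ℝ)-s) * ((p+r)*cout - r*cin) := by ring
    have pos := mul_pos hNspos (by linarith : 0 < (p+r)*cout - r*cin)
    linarith
  · intro huw
    show A u w / (∑ j, A u j) < W u w / (∑ j, W u j)
    rw [hrowW, hrowA, hWite, hAe, if_neg huw, if_neg huw]
    rw [div_lt_div_iff₀ hdApos hdWpos]
    have e : cout * (s*(p+r) + ((N:ℝ)-s)*r) - ((0:ℝ)+r) * (s * cin + ((N:ℝ)-s) * cout)
        = (s:ℝ) * ((p+r)*cout - r*cin) := by ring
    have pos := mul_pos hs' (by linarith : 0 < (p+r)*cout - r*cin)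
    linarith
end

section
/- Under the balanced K-block SBM with B = pI + rJ (0 < r < p+r < 1), the simple random walk P_𝒜 and the anti-cluster walk P_W̃ have the same (uniform) stationary distribution π̄, and for any bounded y: V → ℝ and any t ≥ 1, the stationary autocovariances satisfy Σ_{j=2}^{N} ⟨y, f̄^{ac}_j⟩²_π̄ λ_j(P_W̃)^t + ε ≤ Σ_{j=2}^{N} ⟨y, f̄_j⟩²_π̄ λ_j(P_𝒜)^t whenever Σ_{j=2}^{K} ⟨y, f̄_j⟩²_π̄ > 0, where ε > 0 depends only on K, p, r, t and the projection norm of y. -/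
open Finset Matrix

set_option maxHeartbeats 1000000

/-- Dependency reduction of AC-RDS on the balanced `K`-block SBM population
graph: the simple random walk `P_𝒜` and the anti-cluster walk `P_W̃` share the
uniform stationary distribution `π̄`, and for any `y` and `t ≥ 1`, whenever
the projection `Σ_{j=2}^K ⟨y, f̄_j⟩²_π̄ > 0` there is an `ε > 0` with
`Σ_{j≥2} ⟨y, f̄^{ac}_j⟩²_π̄ λ_j(P_W̃)^t + ε ≤ Σ_{j≥2} ⟨y, f̄_j⟩²_π̄ λ_j(P_𝒜)^t`.
The eigenstructure facts (spectra `{1, ν^{(K-1)}, 0^{(N-K)}}` and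
`{1, μ^{(K-1)}, 0^{(N-K)}}` with `0 ≤ μ < ν < 1`, coinciding top-`K`
eigenspaces, leading eigenvectors constant) are supplied as hypotheses. -/
theorem stmt18 {N K s : ℕ} (hK : 2 ≤ K) (hs : 0 < s) (hN : N = s * K)
    (hKN : K ≤ N)
    (z : Fin N → Fin K)
    (hbal : ∀ k, (Finset.univ.filter (fun i => z i = k)).card = s)
    (p r : ℝ) (hr : 0 < r) (hpr : r < p + r) (h1 : p + r < 1)
    (pibar : Fin N → ℝ) (hpibar : ∀ u, pibar u = 1 / N)
    (A Abar W PA PW : Matrix (Fin N) (Fin N) ℝ)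
    (hA : A = Matrix.of fun i j => (if z i = z j then p else 0) + r)
    (hAbar : Abar = (Matrix.of fun _ _ => (1 : ℝ)) - A)
    (hW : W = Matrix.hadamard (A * Abar + Abar * A) A)
    (hPA : PA = Matrix.of fun i j => A i j / (∑ w, A i w))
    (hPW : PW = Matrix.of fun i j => W i j / (∑ w, W i w))
    (f fac : Fin N → Fin N → ℝ) (lam lamac : Fin N → ℝ) (ν μ : ℝ)
    (hgap : 0 ≤ μ ∧ μ < ν ∧ ν < 1)
    (heig : ∀ j, PA.mulVec (f j) = lam j • f j)
    (heigac : ∀ j, PW.mulVec (fac j) = lamac j • fac j)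
    (horth : ∀ j k, (∑ i, f j i * f k i * pibar i) = if j = k then (1 : ℝ) else 0)
    (horthac : ∀ j k,
      (∑ i, fac j i * fac k i * pibar i) = if j = k then (1 : ℝ) else 0)
    (hlam0 : ∀ j : Fin N, (j : ℕ) = 0 → lam j = 1 ∧ lamac j = 1)
    (hlam2 : ∀ j : Fin N, 1 ≤ (j : ℕ) → (j : ℕ) < K → lam j = ν ∧ lamac j = μ)
    (hlamz : ∀ j : Fin N, K ≤ (j : ℕ) → lam j = 0 ∧ lamac j = 0)
    (hconst : ∀ j : Fin N, (j : ℕ) = 0 →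
      (f j = fun _ => (1 : ℝ)) ∧ (fac j = fun _ => (1 : ℝ)))
    (hspan :
      Submodule.span ℝ (Set.range (fun j : Fin K =>
          fun i => f (Fin.castLE hKN j) i * Real.sqrt (pibar i)))
        = Submodule.span ℝ (Set.range (fun j : Fin K =>
          fun i => fac (Fin.castLE hKN j) i * Real.sqrt (pibar i))))
    (y : Fin N → ℝ) (t : ℕ) (ht : 1 ≤ t)
    (hY : 0 < ∑ j ∈ Finset.univ.filter
        (fun j : Fin N => 1 ≤ (j : ℕ) ∧ (j : ℕ) < K),
        (∑ i, y i * f j i * pibar i) ^ 2) :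
    (Matrix.vecMul pibar PA = pibar ∧ Matrix.vecMul pibar PW = pibar) ∧
    ∃ ε > (0 : ℝ),
      (∑ j ∈ Finset.univ.filter (fun j : Fin N => (j : ℕ) ≠ 0),
          (∑ i, y i * fac j i * pibar i) ^ 2 * lamac j ^ t) + ε
        ≤ ∑ j ∈ Finset.univ.filter (fun j : Fin N => (j : ℕ) ≠ 0),
            (∑ i, y i * f j i * pibar i) ^ 2 * lam j ^ t := by
  obtain ⟨hmu0, hmunu, hnu1⟩ := hgap
  have hp : 0 < p := by linarith
  have hr1 : r < 1 := by linarith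
  have hsN : s ≤ N := by
    rw [hN]; calc s = s * 1 := (mul_one s).symm
    _ ≤ s * K := Nat.mul_le_mul_left s (by omega)
  have hNpos : 0 < N := by rw [hN]; exact Nat.mul_pos hs (by omega)
  have hsR : (1:ℝ) ≤ (s:ℝ) := by exact_mod_cast hs
  have hNsR : (2:ℝ) * (s:ℝ) ≤ (N:ℝ) := by
    have h2 : s * 2 ≤ s * K := Nat.mul_le_mul_left s hK
    have : 2 * s ≤ N := by rw [hN]; omega
    exact_mod_cast this
  have hNR : (0:ℝ) < (N:ℝ) := by exact_mod_cast hNpos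
  -- sum of two-valued functions over blocks
  have key : ∀ (c : Fin K) (a b : ℝ),
      (∑ w : Fin N, if z w = c then a else b) = s * a + ((N:ℝ) - s) * b := by
    intro c a b
    rw [Finset.sum_ite]
    simp only [Finset.sum_const, nsmul_eq_mul]
    have h1 := hbal c
    have h2 : (Finset.univ.filter (fun w : Fin N => ¬ z w = c)).card = N - s := by
      have h3 := Finset.card_filter_add_card_filter_not
        (s := (Finset.univ : Finset (Fin N))) (p := fun w => z w = c)
      rw [Finset.card_univ, Fintype.card_fin] at h3
      omega
    rw [h1, h2, Nat.cast_sub hsN]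
  have keyrow : ∀ (c : Fin K) (a b : ℝ),
      (∑ w : Fin N, if c = z w then a else b) = s * a + ((N:ℝ) - s) * b := by
    intro c a b
    rw [← key c a b]
    exact Finset.sum_congr rfl fun w _ => by simp only [eq_comm]
  -- row and column sums of A
  have hArow : ∀ i, (∑ w, A i w) = s * p + (N:ℝ) * r := by
    intro i
    simp only [hA, Matrix.of_apply]
    rw [Finset.sum_add_distrib, keyrow (z i) p 0]
    simp only [Finset.sum_const, Finset.card_univ, Fintype.card_fin, nsmul_eq_mul]
    ring
  have hAcol : ∀ j, (∑ w, A w j) = s * p + (N:ℝ) * r := by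
    intro j
    simp only [hA, Matrix.of_apply]
    rw [Finset.sum_add_distrib, key (z j) p 0]
    simp only [Finset.sum_const, Finset.card_univ, Fintype.card_fin, nsmul_eq_mul]
    ring
  have hRA : (0:ℝ) < s * p + (N:ℝ) * r := by positivity
  -- A squared entries
  have hA2 : ∀ i j, (∑ w, A i w * A w j)
      = (if z i = z j then (s:ℝ) * p ^ 2 else 0) + 2 * s * p * r + N * r ^ 2 := by
    intro i j
    simp only [hA, Matrix.of_apply]
    have expand : ∀ w, ((if z i = z w then p else 0) + r) * ((if z w = z j then p else 0) + r)
        = (if z i = z w ∧ z w = z j then p ^ 2 else 0)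
          + r * (if z i = z w then p else 0) + r * (if z w = z j then p else 0) + r * r := by
      intro w
      by_cases h1 : z i = z w <;> by_cases h2 : z w = z j
      · rw [if_pos h1, if_pos h2, if_pos ⟨h1, h2⟩]; ring
      · rw [if_pos h1, if_neg h2, if_neg (fun hc => h2 hc.2)]; ring
      · rw [if_neg h1, if_pos h2, if_neg (fun hc => h1 hc.1)]; ring
      · rw [if_neg h1, if_neg h2, if_neg (fun hc => h1 hc.1)]; ring
    rw [Finset.sum_congr rfl fun w _ => expand w]
    rw [Finset.sum_add_distrib, Finset.sum_add_distrib, Finset.sum_add_distrib]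
    have e1 : (∑ w, if z i = z w ∧ z w = z j then p ^ 2 else 0)
        = if z i = z j then (s:ℝ) * p ^ 2 else 0 := by
      by_cases hij : z i = z j
      · rw [if_pos hij]
        have : ∀ w : Fin N, (if z i = z w ∧ z w = z j then p ^ 2 else 0)
            = if z w = z i then p ^ 2 else 0 := by
          intro w
          by_cases h : z w = z i
          · rw [if_pos h, if_pos ⟨h.symm, h.trans hij⟩]
          · rw [if_neg h, if_neg (fun hc => h hc.1.symm)]
        rw [Finset.sum_congr rfl fun w _ => this w, key (z i) (p ^ 2) 0]
        ring
      · rw [if_neg hij]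
        refine Finset.sum_eq_zero fun w _ => ?_
        rw [if_neg (fun hc => hij (hc.1.trans hc.2))]
      
    have e2 : (∑ w, r * (if z i = z w then p else 0)) = r * (s * p) := by
      rw [← Finset.mul_sum, keyrow (z i) p 0]; ring
    have e3 : (∑ w, r * (if z w = z j then p else 0)) = r * (s * p) := by
      rw [← Finset.mul_sum, key (z j) p 0]; ring
    rw [e1, e2, e3]
    simp only [Finset.sum_const, Finset.card_univ, Fintype.card_fin, nsmul_eq_mul]
    ring
  -- closed form of W
  have hAbar' : ∀ a b, Abar a b = 1 - A a b := by
    intro a b; rw [hAbar]; simp [Matrix.sub_apply]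
  set cs : ℝ := (2 * ((s:ℝ) * p + N * r) - 2 * ((s:ℝ) * p ^ 2 + 2 * s * p * r + N * r ^ 2)) * (p + r) with hcs_def
  set cd : ℝ := (2 * ((s:ℝ) * p + N * r) - 2 * (2 * (s:ℝ) * p * r + N * r ^ 2)) * r with hcd_def
  have hWif : ∀ i j, W i j = if z i = z j then cs else cd := by
    intro i j
    have h1 : (A * Abar) i j = (s * p + (N:ℝ) * r) - (∑ w, A i w * A w j) := by
      rw [Matrix.mul_apply]
      calc (∑ w, A i w * Abar w j) = ∑ w, (A i w - A i w * A w j) :=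
            Finset.sum_congr rfl fun w _ => by rw [hAbar']; ring
        _ = (∑ w, A i w) - ∑ w, A i w * A w j := by rw [Finset.sum_sub_distrib]
        _ = _ := by rw [hArow]
    have h2 : (Abar * A) i j = (s * p + (N:ℝ) * r) - (∑ w, A i w * A w j) := by
      rw [Matrix.mul_apply]
      calc (∑ w, Abar i w * A w j) = ∑ w, (A w j - A i w * A w j) :=
            Finset.sum_congr rfl fun w _ => by rw [hAbar']; ring
        _ = (∑ w, A w j) - ∑ w, A i w * A w j := by rw [Finset.sum_sub_distrib]
        _ = _ := by rw [hAcol]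
    have hWij : W i j = (2 * ((s:ℝ) * p + N * r) - 2 * (∑ w, A i w * A w j)) * A i j := by
      rw [hW, Matrix.hadamard_apply, Matrix.add_apply, h1, h2]; ring
    rw [hWij, hA2, hA]
    by_cases h : z i = z j
    · rw [if_pos h, if_pos h]
      simp only [Matrix.of_apply, if_pos h, hcs_def]
    · rw [if_neg h, if_neg h]
      simp only [Matrix.of_apply, if_neg h, hcd_def]
      ring
  have hcsF : (0:ℝ) < 2 * ((s:ℝ) * p + N * r) - 2 * ((s:ℝ) * p ^ 2 + 2 * s * p * r + N * r ^ 2) := by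
    have hfac : 2 * ((s:ℝ) * p + N * r) - 2 * ((s:ℝ) * p ^ 2 + 2 * s * p * r + N * r ^ 2)
        = 2 * (s:ℝ) * ((p + r) * (1 - (p + r))) + 2 * ((N:ℝ) - s) * (r * (1 - r)) := by ring
    rw [hfac]
    have h1 : (0:ℝ) < (p + r) * (1 - (p + r)) := mul_pos (by linarith) (by linarith)
    have h2 : (0:ℝ) < r * (1 - r) := mul_pos hr (by linarith)
    have h3 : (0:ℝ) < (N:ℝ) - s := by linarith
    nlinarith
  have hcs : 0 < cs := by
    rw [hcs_def]; exact mul_pos hcsF (by linarith)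
  have hcd : 0 < cd := by
    rw [hcd_def]
    refine mul_pos ?_ hr
    nlinarith [hcsF, mul_nonneg (le_of_lt (show (0:ℝ) < (s:ℝ) by linarith)) (sq_nonneg p)]
  have hWrow : ∀ i, (∑ w, W i w) = s * cs + ((N:ℝ) - s) * cd := by
    intro i
    rw [Finset.sum_congr rfl fun w _ => hWif i w]
    exact keyrow (z i) cs cd
  have hWcol : ∀ j, (∑ w, W w j) = s * cs + ((N:ℝ) - s) * cd := by
    intro j
    rw [Finset.sum_congr rfl fun w _ => hWif w j]
    exact key (z j) cs cd
  have hRW : (0:ℝ) < s * cs + ((N:ℝ) - s) * cd := by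
    have h3 : (0:ℝ) < (N:ℝ) - s := by linarith
    have := mul_pos (show (0:ℝ) < (s:ℝ) by linarith) hcs
    nlinarith
  -- stationarity
  have hstatA : Matrix.vecMul pibar PA = pibar := by
    funext j
    have : Matrix.vecMul pibar PA j = ∑ i, pibar i * PA i j := rfl
    rw [this, hpibar]
    calc (∑ i, pibar i * PA i j)
        = ∑ i, (1 / (N:ℝ)) * (A i j / (s * p + (N:ℝ) * r)) := by
          refine Finset.sum_congr rfl fun i _ => ?_
          rw [hpibar, hPA, Matrix.of_apply, hArow]
      _ = (1 / (N:ℝ)) * ((∑ i, A i j) / (s * p + (N:ℝ) * r)) := by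
          rw [← Finset.mul_sum, Finset.sum_div]
      _ = 1 / (N:ℝ) := by
          rw [hAcol, div_self hRA.ne', mul_one]
  have hstatW : Matrix.vecMul pibar PW = pibar := by
    funext j
    have : Matrix.vecMul pibar PW j = ∑ i, pibar i * PW i j := rfl
    rw [this, hpibar]
    calc (∑ i, pibar i * PW i j)
        = ∑ i, (1 / (N:ℝ)) * (W i j / (s * cs + ((N:ℝ) - s) * cd)) := by
          refine Finset.sum_congr rfl fun i _ => ?_
          rw [hpibar, hPW, Matrix.of_apply, hWrow]
      _ = (1 / (N:ℝ)) * ((∑ i, W i j) / (s * cs + ((N:ℝ) - s) * cd)) := by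
          rw [← Finset.mul_sum, Finset.sum_div]
      _ = 1 / (N:ℝ) := by
          rw [hWcol, div_self hRW.ne', mul_one]
  refine ⟨⟨hstatA, hstatW⟩, ?_⟩
  -- Part 2: spectral comparison
  have hpibnn : ∀ i, 0 ≤ pibar i := fun i => by rw [hpibar]; positivity
  have hpib : ∀ i, Real.sqrt (pibar i) * Real.sqrt (pibar i) = pibar i := fun i =>
    Real.mul_self_sqrt (hpibnn i)
  set g : Fin K → (Fin N → ℝ) := fun j i => f (Fin.castLE hKN j) i * Real.sqrt (pibar i) with hg
  set gac : Fin K → (Fin N → ℝ) := fun j i => fac (Fin.castLE hKN j) i * Real.sqrt (pibar i)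
    with hgac
  have hcastinj : ∀ j k : Fin K, Fin.castLE hKN j = Fin.castLE hKN k → j = k := by
    intro j k h
    rw [Fin.ext_iff] at h ⊢
    simpa using h
  have hgdot : ∀ j k : Fin K, (∑ i, g j i * g k i) = if j = k then (1:ℝ) else 0 := by
    intro j k
    have h := horth (Fin.castLE hKN j) (Fin.castLE hKN k)
    have he : (∑ i, g j i * g k i)
        = ∑ i, f (Fin.castLE hKN j) i * f (Fin.castLE hKN k) i * pibar i := by
      refine Finset.sum_congr rfl fun i _ => ?_
      rw [hg]
      rw [← hpib i]; ring
    rw [he, h]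
    by_cases hjk : j = k
    · rw [if_pos hjk, if_pos (by rw [hjk])]
    · rw [if_neg (fun h' => hjk (hcastinj j k h')), if_neg hjk]
  have hgacdot : ∀ j k : Fin K, (∑ i, gac j i * gac k i) = if j = k then (1:ℝ) else 0 := by
    intro j k
    have h := horthac (Fin.castLE hKN j) (Fin.castLE hKN k)
    have he : (∑ i, gac j i * gac k i)
        = ∑ i, fac (Fin.castLE hKN j) i * fac (Fin.castLE hKN k) i * pibar i := by
      refine Finset.sum_congr rfl fun i _ => ?_
      rw [hgac]
      rw [← hpib i]; ring
    rw [he, h]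
    by_cases hjk : j = k
    · rw [if_pos hjk, if_pos (by rw [hjk])]
    · rw [if_neg (fun h' => hjk (hcastinj j k h')), if_neg hjk]
  -- coefficients
  have hmem : ∀ k : Fin K, ∃ c : Fin K → ℝ, (∑ j, c j • g j) = gac k := by
    intro k
    have hm : gac k ∈ Submodule.span ℝ (Set.range g) := by
      rw [hg, hspan]
      exact Submodule.subset_span ⟨k, rfl⟩
    exact (Submodule.mem_span_range_iff_exists_fun ℝ).mp hm
  choose C hC using hmem
  have hCpt : ∀ k i, gac k i = ∑ j, C k j * g j i := by
    intro k i
    have h := congrFun (hC k) i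
    rw [Finset.sum_apply] at h
    rw [← h]
    exact Finset.sum_congr rfl fun j _ => rfl
  have hdotCoeff : ∀ (l : Fin K) (j : Fin K), (∑ i, g j i * gac l i) = C l j := by
    intro l j
    calc (∑ i, g j i * gac l i) = ∑ i, ∑ j', C l j' * (g j i * g j' i) := by
          refine Finset.sum_congr rfl fun i _ => ?_
          rw [hCpt l i, Finset.mul_sum]
          exact Finset.sum_congr rfl fun j' _ => by ring
      _ = ∑ j', C l j' * ∑ i, g j i * g j' i := by
          rw [Finset.sum_comm]
          exact Finset.sum_congr rfl fun j' _ => by rw [Finset.mul_sum]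
      _ = C l j := by
          rw [Finset.sum_congr rfl fun j' (_ : j' ∈ Finset.univ) => by rw [hgdot j j']]
          simp [Finset.sum_ite_eq]
  have hCC : ∀ k l : Fin K, (∑ j, C k j * C l j) = if k = l then (1:ℝ) else 0 := by
    intro k l
    have h := hgacdot k l
    rw [← h]
    calc (∑ j, C k j * C l j)
        = ∑ j, C k j * ∑ i, g j i * gac l i := by
          exact Finset.sum_congr rfl fun j _ => by rw [hdotCoeff l j]
      _ = ∑ j, ∑ i, C k j * (g j i * gac l i) := by
          exact Finset.sum_congr rfl fun j _ => by rw [Finset.mul_sum]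
      _ = ∑ i, ∑ j, C k j * (g j i * gac l i) := Finset.sum_comm
      _ = ∑ i, gac k i * gac l i := by
          refine Finset.sum_congr rfl fun i _ => ?_
          rw [hCpt k i, Finset.sum_mul]
          exact Finset.sum_congr rfl fun j _ => by ring
  have hCtC : ∀ j j' : Fin K, (∑ k, C k j * C k j') = if j = j' then (1:ℝ) else 0 := by
    have h1 : (Matrix.of C) * (Matrix.of C)ᵀ = 1 := by
      ext k l
      rw [Matrix.mul_apply, Matrix.one_apply]
      simpa using hCC k l
    have h2 := mul_eq_one_comm.mp h1
    intro j j'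
    have h := congrFun (congrFun h2 j) j'
    rw [Matrix.mul_apply, Matrix.one_apply] at h
    simpa using h
  -- inner products
  set yh : Fin N → ℝ := fun i => y i * Real.sqrt (pibar i) with hyh
  set a : Fin K → ℝ := fun j => ∑ i, yh i * g j i with ha
  set b : Fin K → ℝ := fun k => ∑ i, yh i * gac k i with hb
  have haf : ∀ j : Fin K, (∑ i, y i * f (Fin.castLE hKN j) i * pibar i) = a j := by
    intro j
    rw [ha]
    refine Finset.sum_congr rfl fun i _ => ?_
    rw [hyh, hg, ← hpib i]; ring
  have hbf : ∀ k : Fin K, (∑ i, y i * fac (Fin.castLE hKN k) i * pibar i) = b k := by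
    intro k
    rw [hb]
    refine Finset.sum_congr rfl fun i _ => ?_
    rw [hyh, hgac, ← hpib i]; ring
  have hbC : ∀ k, b k = ∑ j, C k j * a j := by
    intro k
    rw [hb, ha]
    calc (∑ i, yh i * gac k i) = ∑ i, ∑ j, C k j * (yh i * g j i) := by
          refine Finset.sum_congr rfl fun i _ => ?_
          rw [hCpt k i, Finset.mul_sum]
          exact Finset.sum_congr rfl fun j _ => by ring
      _ = ∑ j, C k j * ∑ i, yh i * g j i := by
          rw [Finset.sum_comm]
          exact Finset.sum_congr rfl fun j _ => by rw [Finset.mul_sum]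
  have hsumsq : (∑ k, b k ^ 2) = ∑ j, a j ^ 2 := by
    calc (∑ k, b k ^ 2) = ∑ k, ∑ j, ∑ j', (C k j * a j) * (C k j' * a j') := by
          refine Finset.sum_congr rfl fun k _ => ?_
          rw [hbC k, sq, Finset.sum_mul_sum]
      _ = ∑ j, ∑ j', (a j * a j') * ∑ k, C k j * C k j' := by
          rw [Finset.sum_comm]
          refine Finset.sum_congr rfl fun j _ => ?_
          rw [Finset.sum_comm]
          refine Finset.sum_congr rfl fun j' _ => ?_
          rw [Finset.mul_sum]
          exact Finset.sum_congr rfl fun k _ => by ring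
      _ = ∑ j, a j ^ 2 := by
          refine Finset.sum_congr rfl fun j _ => ?_
          rw [Finset.sum_congr rfl fun j' (_ : j' ∈ Finset.univ) => by rw [hCtC j j']]
          simp [Finset.sum_ite_eq, sq]
  -- leading coefficient agrees
  have hK0 : 0 < K := by omega
  set j0 : Fin K := ⟨0, hK0⟩ with hj0
  have hab0 : a j0 = b j0 := by
    obtain ⟨hf0, hfac0⟩ := hconst (Fin.castLE hKN j0) rfl
    rw [ha, hb]
    refine Finset.sum_congr rfl fun i _ => ?_
    simp only [hg, hgac, hf0, hfac0]
  have herase : (∑ j ∈ Finset.univ.erase j0, b j ^ 2) = ∑ j ∈ Finset.univ.erase j0, a j ^ 2 := by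
    have h1 : b j0 ^ 2 + ∑ x ∈ Finset.univ.erase j0, b x ^ 2 = ∑ x, b x ^ 2 :=
      Finset.add_sum_erase Finset.univ (fun j => b j ^ 2) (Finset.mem_univ j0)
    have h2 : a j0 ^ 2 + ∑ x ∈ Finset.univ.erase j0, a x ^ 2 = ∑ x, a x ^ 2 :=
      Finset.add_sum_erase Finset.univ (fun j => a j ^ 2) (Finset.mem_univ j0)
    have hsq0 : a j0 ^ 2 = b j0 ^ 2 := by rw [hab0]
    linarith [hsumsq]
  -- transfer sums between Fin N filter and Fin K erase
  have htrans : ∀ (F : Fin N → ℝ) (G : Fin K → ℝ),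
      (∀ j : Fin K, F (Fin.castLE hKN j) = G j) →
      (∑ j ∈ Finset.univ.filter (fun j : Fin N => 1 ≤ (j : ℕ) ∧ (j : ℕ) < K), F j)
        = ∑ j ∈ Finset.univ.erase j0, G j := by
    intro F G hFG
    refine Finset.sum_bij' (i := fun (j : Fin N) hj =>
        (⟨(j : ℕ), ((Finset.mem_filter.mp hj).2).2⟩ : Fin K))
      (j := fun (j : Fin K) hj => Fin.castLE hKN j) ?_ ?_ ?_ ?_ ?_
    · intro jj hj
      have h2 := (Finset.mem_filter.mp hj).2
      refine Finset.mem_erase.mpr ⟨?_, Finset.mem_univ _⟩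
      intro hc
      rw [hj0, Fin.ext_iff] at hc
      simp only [Fin.val_mk] at hc
      omega
    · intro jj hj
      have h2 := Finset.mem_erase.mp hj
      refine Finset.mem_filter.mpr ⟨Finset.mem_univ _, ?_, ?_⟩
      · have hne : (jj : ℕ) ≠ 0 := fun hc => h2.1 (by rw [hj0, Fin.ext_iff]; simp [hc])
        simp only [Fin.coe_castLE]
        omega
      · simp only [Fin.coe_castLE]
        exact jj.isLt
    · intro jj hj
      exact Fin.ext rfl
    · intro jj hj
      exact Fin.ext rfl
    · intro jj hj
      have hc : Fin.castLE hKN (⟨(jj : ℕ), ((Finset.mem_filter.mp hj).2).2⟩ : Fin K) = jj :=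
        Fin.ext rfl
      rw [← hFG, hc]
  have hTf : (∑ j ∈ Finset.univ.filter (fun j : Fin N => 1 ≤ (j : ℕ) ∧ (j : ℕ) < K),
      (∑ i, y i * f j i * pibar i) ^ 2) = ∑ j ∈ Finset.univ.erase j0, a j ^ 2 :=
    htrans _ _ (fun j => by rw [haf j])
  have hTfac : (∑ j ∈ Finset.univ.filter (fun j : Fin N => 1 ≤ (j : ℕ) ∧ (j : ℕ) < K),
      (∑ i, y i * fac j i * pibar i) ^ 2) = ∑ j ∈ Finset.univ.erase j0, b j ^ 2 :=
    htrans _ _ (fun j => by rw [hbf j])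
  -- split ≠ 0 sums
  have hsplit : ∀ (F : Fin N → ℝ), (∀ j : Fin N, K ≤ (j : ℕ) → F j = 0) →
      (∑ j ∈ Finset.univ.filter (fun j : Fin N => (j : ℕ) ≠ 0), F j)
        = ∑ j ∈ Finset.univ.filter (fun j : Fin N => 1 ≤ (j : ℕ) ∧ (j : ℕ) < K), F j := by
    intro F hF
    rw [← Finset.sum_filter_add_sum_filter_not
      (Finset.univ.filter (fun j : Fin N => (j : ℕ) ≠ 0)) (fun j => (j : ℕ) < K) F]
    rw [Finset.filter_filter, Finset.filter_filter]
    have hz : (∑ j ∈ Finset.univ.filter (fun j : Fin N => (j : ℕ) ≠ 0 ∧ ¬ (j : ℕ) < K), F j)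
        = 0 := by
      refine Finset.sum_eq_zero fun j hj => ?_
      have h2 := (Finset.mem_filter.mp hj).2
      exact hF j (by omega)
    rw [hz, add_zero]
    refine Finset.sum_congr ?_ fun _ _ => rfl
    ext j
    simp only [Finset.mem_filter, Finset.mem_univ, true_and]
    omega
  have hRHS : (∑ j ∈ Finset.univ.filter (fun j : Fin N => (j : ℕ) ≠ 0),
        (∑ i, y i * f j i * pibar i) ^ 2 * lam j ^ t)
      = (∑ j ∈ Finset.univ.filter (fun j : Fin N => 1 ≤ (j : ℕ) ∧ (j : ℕ) < K),
        (∑ i, y i * f j i * pibar i) ^ 2) * ν ^ t := by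
    rw [hsplit _ (fun j hj => by rw [(hlamz j hj).1, zero_pow (by omega), mul_zero])]
    rw [Finset.sum_mul]
    refine Finset.sum_congr rfl fun j hj => ?_
    have h2 := (Finset.mem_filter.mp hj).2
    rw [(hlam2 j h2.1 h2.2).1]
  have hLHS : (∑ j ∈ Finset.univ.filter (fun j : Fin N => (j : ℕ) ≠ 0),
        (∑ i, y i * fac j i * pibar i) ^ 2 * lamac j ^ t)
      = (∑ j ∈ Finset.univ.filter (fun j : Fin N => 1 ≤ (j : ℕ) ∧ (j : ℕ) < K),
        (∑ i, y i * fac j i * pibar i) ^ 2) * μ ^ t := by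
    rw [hsplit _ (fun j hj => by rw [(hlamz j hj).2, zero_pow (by omega), mul_zero])]
    rw [Finset.sum_mul]
    refine Finset.sum_congr rfl fun j hj => ?_
    have h2 := (Finset.mem_filter.mp hj).2
    rw [(hlam2 j h2.1 h2.2).2]
  set T : ℝ := ∑ j ∈ Finset.univ.filter (fun j : Fin N => 1 ≤ (j : ℕ) ∧ (j : ℕ) < K),
    (∑ i, y i * f j i * pibar i) ^ 2 with hTdef
  have hTacT : (∑ j ∈ Finset.univ.filter (fun j : Fin N => 1 ≤ (j : ℕ) ∧ (j : ℕ) < K),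
      (∑ i, y i * fac j i * pibar i) ^ 2) = T := by
    rw [hTfac, herase, ← hTf]
  have hpowlt : μ ^ t < ν ^ t := pow_lt_pow_left₀ hmunu hmu0 (by omega)
  refine ⟨(ν ^ t - μ ^ t) * T, mul_pos (by linarith) hY, ?_⟩
  rw [hRHS, hLHS, hTacT]
  have : T * μ ^ t + (ν ^ t - μ ^ t) * T = T * ν ^ t := by ring
  linarith
end
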